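/- arXiv:1907.00188 — 7 statements merged into one kernel-verified Lean document; each statement's English description precedes it below -/
import Mathlib

section
/- For all real x, B(ax) + B(bx) + B((a+b)x) ≥ 1/24 for any positive integers a, b, where B(x) = min_{k∈ℤ} (1/2)(x - 1/2 + k)². -/
/-- `B x = min_{k ∈ ℤ} (1/2)(x - 1/2 + k)²`. -/
noncomputable def B (x : ℝ) : ℝ := ⨅ k : ℤ, (1/2 : ℝ) * (x - 1/2 + (k : ℝ))^2

lemma theta_key (s t : ℝ) (m : ℤ) :
    (1/24 : ℝ) ≤ 1/2 * s^2 + 1/2 * t^2 + 1/2 * (s + t + (m : ℝ) + 1/2)^2 := by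
  have hm : (0 : ℝ) ≤ (m : ℝ)^2 + (m : ℝ) := by
    have : (0 : ℤ) ≤ m^2 + m := by nlinarith [sq_nonneg (2*m+1)]
    exact_mod_cast this
  nlinarith [sq_nonneg (s - t), sq_nonneg (3*(s+t) + 2*((m : ℝ) + 1/2))]

lemma B_lower (u v : ℝ) : (1/24 : ℝ) ≤ B u + B v + B (u + v) := by
  have h3 : ∀ k₁ k₂ : ℤ, (1/24 : ℝ) - (1/2) * (u - 1/2 + (k₁:ℝ))^2
      - (1/2) * (v - 1/2 + (k₂:ℝ))^2 ≤ B (u + v) := by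
    intro k₁ k₂
    refine le_ciInf fun k₃ => ?_
    have heq : (u - 1/2 + (k₁:ℝ)) + (v - 1/2 + (k₂:ℝ)) + ((k₃ - k₁ - k₂ : ℤ) : ℝ) + 1/2
        = u + v - 1/2 + (k₃ : ℝ) := by push_cast; ring
    have := theta_key (u - 1/2 + (k₁:ℝ)) (v - 1/2 + (k₂:ℝ)) (k₃ - k₁ - k₂)
    rw [heq] at this
    linarith
  have h2 : ∀ k₁ : ℤ, (1/24 : ℝ) - (1/2) * (u - 1/2 + (k₁:ℝ))^2 - B (u + v) ≤ B v := by
    intro k₁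
    refine le_ciInf fun k₂ => ?_
    have := h3 k₁ k₂
    linarith
  have h1 : (1/24 : ℝ) - B v - B (u + v) ≤ B u := by
    refine le_ciInf fun k₁ => ?_
    have := h2 k₁
    linarith
  linarith

/-- For positive integers `a, b` and any real `x`,
`B(ax) + B(bx) + B((a+b)x) ≥ 1/24`. -/
theorem theta_quark_order (a b : ℕ) (ha : 0 < a) (hb : 0 < b) (x : ℝ) :
    B ((a : ℝ) * x) + B ((b : ℝ) * x) + B (((a : ℝ) + (b : ℝ)) * x) ≥ 1 / 24 := by
  have h := B_lower ((a : ℝ) * x) ((b : ℝ) * x)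
  have he : (a : ℝ) * x + (b : ℝ) * x = ((a : ℝ) + (b : ℝ)) * x := by ring
  rw [he] at h
  exact h
end

section
/- The minimum over (x,y,z) ∈ ℝ³ with x + y + z = 0 of B(x) + B(y) + B(z) equals 1/24, where B(x) = min_{k∈ℤ} (1/2)(x - 1/2 + k)²; the minimum is attained when the fractional parts of x, y, z all equal 1/3 or all equal 2/3. -/
lemma B_eq_fract (x : ℝ) : B x = (1/2 : ℝ) * (Int.fract x - 1/2)^2 := by
  have hbdd : BddBelow (Set.range fun k : ℤ => (1/2 : ℝ) * (x - 1/2 + (k : ℝ))^2) := by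
    refine ⟨0, ?_⟩
    rintro a ⟨k, rfl⟩
    positivity
  apply le_antisymm
  · have h := ciInf_le hbdd (-⌊x⌋)
    have : (1/2 : ℝ) * (x - 1/2 + ((-⌊x⌋ : ℤ) : ℝ))^2 = (1/2 : ℝ) * (Int.fract x - 1/2)^2 := by
      rw [Int.fract]
      push_cast
      ring_nf
    rw [this] at h
    exact h
  · apply le_ciInf
    intro k
    have hx : x = (⌊x⌋ : ℝ) + Int.fract x := by rw [Int.fract]; ring
    set f := Int.fract x with hf
    have hf0 : 0 ≤ f := Int.fract_nonneg x
    have hf1 : f < 1 := Int.fract_lt_one x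
    have hrw : x - 1/2 + (k : ℝ) = f - 1/2 + ((k + ⌊x⌋ : ℤ) : ℝ) := by
      push_cast; linarith [hx]
    rw [hrw]
    set m := k + ⌊x⌋ with hm
    rcases lt_trichotomy m 0 with h | h | h
    · have hm1 : m ≤ -1 := by omega
      have : (m : ℝ) ≤ -1 := by exact_mod_cast hm1
      nlinarith [sq_nonneg ((m : ℝ) + 1), sq_nonneg (f - 1/2)]
    · rw [h]; norm_num
    · have : (1 : ℝ) ≤ (m : ℝ) := by exact_mod_cast h
      nlinarith [sq_nonneg ((m : ℝ) - 1), sq_nonneg (f - 1/2)]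

/-- The minimum of `B x + B y + B z` over the plane `x + y + z = 0` equals `1/24`,
attained when the fractional parts of `x, y, z` are all `1/3` or all `2/3`. -/
theorem min_sum_B_on_plane :
    IsLeast {s : ℝ | ∃ x y z : ℝ, x + y + z = 0 ∧ s = B x + B y + B z} (1/24) ∧
    ∀ x y z : ℝ, x + y + z = 0 →
      ((Int.fract x = 1/3 ∧ Int.fract y = 1/3 ∧ Int.fract z = 1/3) ∨
       (Int.fract x = 2/3 ∧ Int.fract y = 2/3 ∧ Int.fract z = 2/3)) →
      B x + B y + B z = 1/24 := by
  constructor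
  · constructor
    · refine ⟨1/3, 1/3, -2/3, by norm_num, ?_⟩
      simp only [B_eq_fract]
      have h1 : Int.fract (1/3 : ℝ) = 1/3 := Int.fract_eq_self.mpr (by norm_num)
      have h2 : Int.fract (-2/3 : ℝ) = 1/3 := by
        have : (-2/3 : ℝ) = (-1 : ℤ) + 1/3 := by norm_num
        rw [this, Int.fract_intCast_add, Int.fract_eq_self.mpr (by norm_num)]
      rw [h1, h2]; norm_num
    · rintro s ⟨x, y, z, hsum, rfl⟩
      simp only [B_eq_fract]
      set a := Int.fract x
      set b := Int.fract y
      set c := Int.fract z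
      have ha0 : 0 ≤ a := Int.fract_nonneg x
      have ha1 : a < 1 := Int.fract_lt_one x
      have hb0 : 0 ≤ b := Int.fract_nonneg y
      have hb1 : b < 1 := Int.fract_lt_one y
      have hc0 : 0 ≤ c := Int.fract_nonneg z
      have hc1 : c < 1 := Int.fract_lt_one z
      have hsum' : a + b + c = -((⌊x⌋ + ⌊y⌋ + ⌊z⌋ : ℤ) : ℝ) := by
        simp only [a, b, c, Int.fract]
        push_cast
        linarith
      set n := ⌊x⌋ + ⌊y⌋ + ⌊z⌋ with hn
      have hlb : -2 ≤ n := by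
        by_contra h
        push_neg at h
        have hn3 : n ≤ -3 := by omega
        have : (n : ℝ) ≤ -3 := by exact_mod_cast hn3
        linarith
      have hub : n ≤ 0 := by
        by_contra h
        push_neg at h
        have : (1 : ℝ) ≤ (n : ℝ) := by exact_mod_cast h
        linarith
      interval_cases n <;>
        · norm_num at hsum'
          nlinarith [sq_nonneg (a - b), sq_nonneg (b - c), sq_nonneg (a - c)]
  · rintro x y z hxyz (⟨hx, hy, hz⟩ | ⟨hx, hy, hz⟩) <;>
      · simp only [B_eq_fract, hx, hy, hz]; norm_num
end

section
/- For a = (a₁,…,a_N) ∈ ℤ^N, the quantity 24·min_{x∈ℝ} ∑_j B(aⱼ x) equals 3·min over n ∈ ℤ^N with all entries odd of S_a(n)/‖a‖², where S_a(n) = ‖n‖²·‖a‖² − (n·a)² and B(x) = min_{k∈ℤ} (1/2)(x - 1/2 + k)². -/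
open scoped BigOperators

/-- `S_a(n) = ‖n‖²‖a‖² − (n·a)²`. -/
def Svec {N : ℕ} (a n : Fin N → ℤ) : ℤ :=
  (∑ j, (n j)^2) * (∑ j, (a j)^2) - (∑ j, n j * a j)^2

lemma B_bddBelow (y : ℝ) : BddBelow (Set.range fun k : ℤ => (1/2 : ℝ) * (y - 1/2 + (k : ℝ))^2) := by
  refine ⟨0, ?_⟩
  rintro v ⟨k, rfl⟩
  positivity

lemma B_eq (y : ℝ) :
    B y = (1/8 : ℝ) * (2*y - ((2 * round (y - 1/2) + 1 : ℤ) : ℝ))^2 := by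
  apply le_antisymm
  · have h := ciInf_le (B_bddBelow y) (-(round (y - 1/2)))
    refine h.trans_eq ?_
    push_cast
    ring
  · apply le_ciInf
    intro k
    have h := round_le (y - 1/2) (-k)
    have h2 : (y - 1/2 - round (y - 1/2))^2 ≤ (y - 1/2 + k)^2 := by
      have := mul_self_le_mul_self (abs_nonneg _) h
      rw [abs_mul_abs_self, abs_mul_abs_self] at this
      push_cast at this ⊢
      nlinarith [this]
    push_cast at h2 ⊢
    nlinarith [h2]

lemma B_le_odd (y : ℝ) (c : ℤ) : B y ≤ (1/8 : ℝ) * (2*y - ((2*c + 1 : ℤ) : ℝ))^2 := by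
  have h := ciInf_le (B_bddBelow y) (-c)
  refine h.trans_eq ?_
  push_cast
  ring

lemma B_nonneg (y : ℝ) : 0 ≤ B y := by
  apply le_ciInf
  intro k
  positivity

/-- `24·min_x ∑_j B(aⱼx) = 3·min_{n odd} S_a(n)/‖a‖²`. -/
theorem twentyfour_min_order_eq (N : ℕ) (a : Fin N → ℤ) (ha : a ≠ 0) :
    24 * (⨅ x : ℝ, ∑ j, B ((a j : ℝ) * x)) =
      3 * (⨅ n : {n : Fin N → ℤ // ∀ j, Odd (n j)},
            ((Svec a n.1 : ℤ) : ℝ) / (∑ j, ((a j : ℝ))^2)) := by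
  set A : ℝ := ∑ j, ((a j : ℝ))^2 with hAdef
  -- A > 0
  have haj : ∃ j, a j ≠ 0 := by
    by_contra h
    push_neg at h
    exact ha (funext h)
  obtain ⟨j₀, hj₀⟩ := haj
  have hA : 0 < A := by
    apply Finset.sum_pos' (fun j _ => by positivity)
    refine ⟨j₀, Finset.mem_univ _, ?_⟩
    have : (a j₀ : ℝ) ≠ 0 := Int.cast_ne_zero.mpr hj₀
    positivity
  -- Svec is nonneg
  have hSnonneg : ∀ n : Fin N → ℤ, 0 ≤ Svec a n := by
    intro n
    have := Finset.sum_mul_sq_le_sq_mul_sq Finset.univ n a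
    simpa [Svec, sub_nonneg] using this
  -- cast of Svec
  have hScast : ∀ n : Fin N → ℤ, ((Svec a n : ℤ) : ℝ)
      = (∑ j, ((n j : ℝ))^2) * A - (∑ j, (n j : ℝ) * (a j : ℝ))^2 := by
    intro n
    simp only [Svec, hAdef]
    push_cast
    ring
  -- sum expansion
  have hT : ∀ (n : Fin N → ℤ) (x : ℝ),
      ∑ j, (2*(a j : ℝ)*x - (n j : ℝ))^2
        = 4*x^2*A - 4*x*(∑ j, (n j : ℝ) * (a j : ℝ)) + (∑ j, ((n j : ℝ))^2) := by
    intro n x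
    have hterm : ∀ j ∈ Finset.univ, (2*(a j : ℝ)*x - (n j : ℝ))^2
        = 4*x^2*((a j : ℝ))^2 - 4*x*((n j : ℝ)*(a j : ℝ)) + ((n j : ℝ))^2 :=
      fun j _ => by ring
    rw [Finset.sum_congr rfl hterm, Finset.sum_add_distrib, Finset.sum_sub_distrib,
      ← Finset.mul_sum, ← Finset.mul_sum, hAdef]
  -- the quadratic lower bound
  have hquad : ∀ (n : Fin N → ℤ) (x : ℝ),
      ((Svec a n : ℤ) : ℝ) / A ≤ ∑ j, (2*(a j : ℝ)*x - (n j : ℝ))^2 := by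
    intro n x
    rw [div_le_iff₀ hA, hScast n, hT n x]
    nlinarith [sq_nonneg (2*A*x - (∑ j, (n j : ℝ) * (a j : ℝ)))]
  haveI : Nonempty {n : Fin N → ℤ // ∀ j, Odd (n j)} := ⟨⟨fun _ => 1, fun _ => odd_one⟩⟩
  -- least value of Svec over odd vectors
  obtain ⟨m, ⟨n₀, hn₀odd, hn₀val⟩, hmleast⟩ :=
    Int.exists_least_of_bdd (P := fun z => ∃ n : Fin N → ℤ, (∀ j, Odd (n j)) ∧ Svec a n = z)
      ⟨0, fun z ⟨n, _, hz⟩ => hz ▸ hSnonneg n⟩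
      ⟨Svec a (fun _ => 1), (fun _ => 1), fun _ => odd_one, rfl⟩
  have hmle : ∀ n : Fin N → ℤ, (∀ j, Odd (n j)) → m ≤ Svec a n :=
    fun n hn => hmleast _ ⟨n, hn, rfl⟩
  have hm0 : (0:ℤ) ≤ m := hn₀val ▸ hSnonneg n₀
  -- RHS infimum equals m / A
  have hRHS : (⨅ n : {n : Fin N → ℤ // ∀ j, Odd (n j)},
      ((Svec a n.1 : ℤ) : ℝ) / A) = (m : ℝ) / A := by
    apply le_antisymm
    · have hbdd : BddBelow (Set.range fun n : {n : Fin N → ℤ // ∀ j, Odd (n j)} =>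
          ((Svec a n.1 : ℤ) : ℝ) / A) := by
        refine ⟨0, ?_⟩
        rintro v ⟨n, rfl⟩
        have := hSnonneg n.1
        positivity
      have := ciInf_le hbdd ⟨n₀, hn₀odd⟩
      rwa [hn₀val] at this
    · apply le_ciInf
      intro n
      have h1 : (m : ℝ) ≤ ((Svec a n.1 : ℤ) : ℝ) := by
        exact_mod_cast hmle n.1 n.2
      gcongr
  -- LHS infimum equals m / (8 A)
  have hLHS : (⨅ x : ℝ, ∑ j, B ((a j : ℝ) * x)) = (m : ℝ) / (8 * A) := by
    apply le_antisymm
    · -- choose the optimal x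
      set P : ℝ := ∑ j, (n₀ j : ℝ) * (a j : ℝ) with hP
      set x₀ : ℝ := P / (2 * A) with hx₀
      have hbdd : BddBelow (Set.range fun x : ℝ => ∑ j, B ((a j : ℝ) * x)) := by
        refine ⟨0, ?_⟩
        rintro v ⟨x, rfl⟩
        exact Finset.sum_nonneg fun j _ => B_nonneg _
      refine (ciInf_le hbdd x₀).trans ?_
      have hstep : ∑ j, B ((a j : ℝ) * x₀)
          ≤ (1/8 : ℝ) * ∑ j, (2*(a j : ℝ)*x₀ - (n₀ j : ℝ))^2 := by
        rw [Finset.mul_sum]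
        apply Finset.sum_le_sum
        intro j _
        obtain ⟨c, hc⟩ := hn₀odd j
        have := B_le_odd ((a j : ℝ) * x₀) c
        rw [hc]
        refine this.trans_eq ?_
        push_cast
        ring
      refine hstep.trans ?_
      have hx0eq : 2*A*x₀ - P = 0 := by
        rw [hx₀]
        field_simp
        ring
      have hTx : ∑ j, (2*(a j : ℝ)*x₀ - (n₀ j : ℝ))^2 = ((Svec a n₀ : ℤ) : ℝ) / A := by
        rw [hT n₀ x₀, eq_div_iff hA.ne', hScast n₀]
        nlinarith [hx0eq]
      rw [hTx, hn₀val]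
      exact le_of_eq (by ring)
    · apply le_ciInf
      intro x
      -- choose nearest odd integers
      obtain ⟨n, hnodd, hBn⟩ : ∃ n : Fin N → ℤ, (∀ j, Odd (n j)) ∧
          ∀ j, B ((a j : ℝ) * x) = (1/8 : ℝ) * (2*((a j : ℝ))*x - ((n j : ℤ) : ℝ))^2 := by
        refine ⟨fun j => 2 * round ((a j : ℝ) * x - 1/2) + 1,
          fun j => ⟨round ((a j : ℝ) * x - 1/2), rfl⟩, fun j => ?_⟩
        have := B_eq ((a j : ℝ) * x)
        refine this.trans ?_
        push_cast
        ring
      have hfeq : ∑ j, B ((a j : ℝ) * x)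
          = (1/8 : ℝ) * ∑ j, (2*(a j : ℝ)*x - (n j : ℝ))^2 := by
        rw [Finset.mul_sum]
        exact Finset.sum_congr rfl fun j _ => hBn j
      rw [hfeq]
      have h1 := hquad n x
      have h2 : (m : ℝ) ≤ ((Svec a n : ℤ) : ℝ) := by exact_mod_cast hmle n hnodd
      have h3 : (m : ℝ) / A ≤ ∑ j, (2*(a j : ℝ)*x - (n j : ℝ))^2 := by
        refine le_trans ?_ h1
        gcongr
      rw [div_le_iff₀ (by positivity)] at h3 ⊢
      nlinarith [h3]
  rw [hLHS, hRHS]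
  field_simp
  ring
end

section
/- Let a ∈ ℝ^N be nonzero and let u₁,…,u_r be pairwise orthogonal nonzero vectors in ℤ^N, each orthogonal to a, with ‖uⱼ‖² odd for each j. Then for every n ∈ ℤ^N with all coordinates odd, S_a(n) ≥ (∑_{j=1}^r 1/‖uⱼ‖²)·‖a‖², where S_a(n) = ‖n‖²‖a‖² − (n·a)². -/
open scoped BigOperators

/-- If `u₁,…,u_r` are pairwise orthogonal nonzero integer vectors, each orthogonal
to a nonzero `a ∈ ℝ^N`, with odd square lengths, then for every `n ∈ ℤ^N` with all
odd coordinates, `S_a(n) ≥ (∑_j 1/‖uⱼ‖²)·‖a‖²`. -/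
theorem S_ge_sum_inv_norms (N r : ℕ) (a : Fin N → ℝ) (ha : a ≠ 0)
    (u : Fin r → (Fin N → ℤ))
    (hu0 : ∀ j, u j ≠ 0)
    (hperp : ∀ i j, i ≠ j → ∑ k, (u i k : ℝ) * (u j k : ℝ) = 0)
    (horth : ∀ j, ∑ k, (u j k : ℝ) * a k = 0)
    (hodd : ∀ j, Odd (∑ k, (u j k)^2))
    (n : Fin N → ℤ) (hn : ∀ k, Odd (n k)) :
    (∑ k, ((n k : ℝ))^2) * (∑ k, (a k)^2) - (∑ k, (n k : ℝ) * a k)^2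
      ≥ (∑ j, 1 / (∑ k, ((u j k : ℝ))^2)) * (∑ k, (a k)^2) := by
  set Q : Fin r → ℝ := fun j => ∑ k, ((u j k : ℝ))^2 with hQdef
  set P : Fin r → ℝ := fun j => ∑ k, (n k : ℝ) * (u j k : ℝ) with hPdef
  have hQ1 : ∀ j, 1 ≤ Q j := by
    intro j
    have h1 : (1:ℤ) ≤ ∑ k, (u j k)^2 := by
      rcases hodd j with ⟨m, hm⟩
      have h0 : (0:ℤ) ≤ ∑ k, (u j k)^2 :=
        Finset.sum_nonneg (fun k _ => sq_nonneg (u j k))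
      omega
    calc (1:ℝ) ≤ ((∑ k, (u j k)^2 : ℤ) : ℝ) := by exact_mod_cast h1
      _ = Q j := by push_cast [hQdef]; rfl
  have hQpos : ∀ j, 0 < Q j := fun j => lt_of_lt_of_le one_pos (hQ1 j)
  have hodd' : ∀ j, Odd (∑ k, n k * u j k) := by
    intro j
    have h2 := hodd j
    rw [Int.odd_iff] at h2 ⊢
    rw [Finset.sum_int_mod] at h2 ⊢
    have he : ∀ k, (n k * u j k) % 2 = (u j k ^ 2) % 2 := by
      intro k
      have hk := hn k
      rw [Int.odd_iff] at hk
      rw [Int.mul_emod, hk, sq]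
      conv_rhs => rw [Int.mul_emod]
      rcases Int.emod_two_eq_zero_or_one (u j k) with h | h <;> rw [h] <;> decide
    rw [Finset.sum_congr rfl fun k _ => he k]
    exact h2
  have hP1 : ∀ j, 1 ≤ P j ^ 2 := by
    intro j
    have h0 : (∑ k, n k * u j k) ≠ 0 := by
      intro h
      have := hodd' j
      rw [h] at this
      exact (Int.not_odd_iff_even.mpr Even.zero) this
    have habs := Int.one_le_abs h0
    have h1 : (1:ℤ) ≤ (∑ k, n k * u j k)^2 := by nlinarith [sq_abs (∑ k, n k * u j k)]
    have hcast : P j = ((∑ k, n k * u j k : ℤ) : ℝ) := by push_cast [hPdef]; rfl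
    rw [hcast]
    exact_mod_cast (by exact_mod_cast h1 : (1:ℝ) ≤ ((∑ k, n k * u j k : ℤ):ℝ)^2)
  -- projection remainder
  set s : Fin N → ℝ := fun k => ∑ j, (P j / Q j) * (u j k : ℝ) with hsdef
  have hA : ∑ k, ((n k:ℝ) - s k) * a k = ∑ k, (n k:ℝ) * a k := by
    simp only [sub_mul, Finset.sum_sub_distrib]
    have hz : ∑ k, s k * a k = 0 := by
      simp only [hsdef, Finset.sum_mul]
      rw [Finset.sum_comm]
      refine Finset.sum_eq_zero fun j _ => ?_
      have : ∀ k, P j / Q j * (u j k : ℝ) * a k = P j / Q j * ((u j k : ℝ) * a k) := by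
        intro k; ring
      simp only [this, ← Finset.mul_sum, horth j, mul_zero]
    rw [hz, sub_zero]
  have hus : ∀ j, ∑ k, (u j k : ℝ) * s k = P j := by
    intro j
    simp only [hsdef, Finset.mul_sum]
    rw [Finset.sum_comm]
    have : ∀ i, ∑ k, (u j k:ℝ) * (P i / Q i * (u i k:ℝ)) = (P i / Q i) * ∑ k, (u i k:ℝ) * (u j k:ℝ) := by
      intro i
      rw [Finset.mul_sum]
      exact Finset.sum_congr rfl fun k _ => by ring
    simp only [this]
    rw [Finset.sum_eq_single j]
    · rw [show ∑ k, (u j k:ℝ) * (u j k:ℝ) = Q j from by simp [hQdef, sq]]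
      rw [div_mul_cancel₀ _ (hQpos j).ne']
    · intro i _ hij
      rw [hperp i j hij, mul_zero]
    · simp
  have hns : ∑ k, (n k:ℝ) * s k = ∑ j, P j ^ 2 / Q j := by
    simp only [hsdef, Finset.mul_sum]
    rw [Finset.sum_comm]
    refine Finset.sum_congr rfl fun j _ => ?_
    have : ∀ k, (n k:ℝ) * (P j / Q j * (u j k:ℝ)) = (P j / Q j) * ((n k:ℝ) * (u j k:ℝ)) := by
      intro k; ring
    simp only [this, ← Finset.mul_sum]
    rw [show ∑ k, (n k:ℝ) * (u j k:ℝ) = P j from rfl]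
    ring
  have hss : ∑ k, s k ^ 2 = ∑ j, P j ^ 2 / Q j := by
    have : ∀ k, s k ^ 2 = ∑ j, (P j / Q j) * ((u j k:ℝ) * s k) := by
      intro k
      rw [sq, hsdef]
      simp only [Finset.sum_mul]
      exact Finset.sum_congr rfl fun j _ => by ring
    simp only [this]
    rw [Finset.sum_comm]
    refine Finset.sum_congr rfl fun j _ => ?_
    rw [← Finset.mul_sum, hus j]
    field_simp
  have hB : ∑ k, ((n k:ℝ) - s k)^2 = (∑ k, (n k:ℝ)^2) - ∑ j, P j ^ 2 / Q j := by
    have : ∀ k, ((n k:ℝ) - s k)^2 = (n k:ℝ)^2 - 2 * ((n k:ℝ) * s k) + s k ^ 2 := by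
      intro k; ring
    simp only [this]
    rw [Finset.sum_add_distrib, Finset.sum_sub_distrib, ← Finset.mul_sum, hns, hss]
    ring
  have hCS : (∑ k, ((n k:ℝ) - s k) * a k)^2 ≤ (∑ k, ((n k:ℝ) - s k)^2) * (∑ k, (a k)^2) :=
    Finset.sum_mul_sq_le_sq_mul_sq _ _ _
  have hsumle : ∑ j, 1 / Q j ≤ ∑ j, P j ^ 2 / Q j := by
    refine Finset.sum_le_sum fun j _ => ?_
    exact (div_le_div_iff_of_pos_right (hQpos j)).mpr (hP1 j)
  have ha2 : 0 ≤ ∑ k, (a k)^2 := Finset.sum_nonneg fun k _ => sq_nonneg _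
  rw [← hA]
  nlinarith [hCS, hB, hsumle, ha2]
end

section
/- For a = (a, b, a+b) with a, b positive integers and any n ∈ ℤ³ with all coordinates odd, one has S_a(n) ≥ (1/3)(a² + b² + (a+b)²), where S_a(n) = ‖n‖²‖a‖² − (n·a)². -/
/-- For `a = (a, b, a+b)` with `a, b` positive and `n` with all odd coordinates,
`S_a(n) ≥ (1/3)(a² + b² + (a+b)²)`. -/
theorem S_quark_ge (a b : ℤ) (ha : 0 < a) (hb : 0 < b)
    (n₁ n₂ n₃ : ℤ) (h₁ : Odd n₁) (h₂ : Odd n₂) (h₃ : Odd n₃) :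
    (((n₁^2 + n₂^2 + n₃^2) * (a^2 + b^2 + (a+b)^2)
        - (n₁*a + n₂*b + n₃*(a+b))^2 : ℤ) : ℝ)
      ≥ (1/3) * ((a : ℝ)^2 + (b : ℝ)^2 + ((a : ℝ) + (b : ℝ))^2) := by
  have hm : Odd (n₁ + n₂ - n₃) := by
    rcases h₁ with ⟨x, hx⟩; rcases h₂ with ⟨y, hy⟩; rcases h₃ with ⟨z, hz⟩
    exact ⟨x + y - z, by omega⟩
  have hm1 : 1 ≤ (n₁ + n₂ - n₃)^2 := by
    have h0 : n₁ + n₂ - n₃ ≠ 0 := by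
      intro h; rw [h] at hm; exact (Int.not_odd_iff_even.mpr Even.zero) hm
    have := Int.one_le_abs h0
    nlinarith [sq_abs (n₁ + n₂ - n₃)]
  have key : 3 * ((n₁^2 + n₂^2 + n₃^2) * (a^2 + b^2 + (a+b)^2)
        - (n₁*a + n₂*b + n₃*(a+b))^2)
      ≥ (n₁ + n₂ - n₃)^2 * (a^2 + b^2 + (a+b)^2) := by
    nlinarith [sq_nonneg (-(a+2*b)*n₁ + (2*a+b)*n₂ + (a-b)*n₃)]
  have hInt : 3 * ((n₁^2 + n₂^2 + n₃^2) * (a^2 + b^2 + (a+b)^2)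
        - (n₁*a + n₂*b + n₃*(a+b))^2) ≥ a^2 + b^2 + (a+b)^2 := by
    nlinarith [key, hm1, sq_nonneg a, sq_nonneg b, sq_nonneg (a+b)]
  have hR : (3 : ℝ) * (((n₁^2 + n₂^2 + n₃^2) * (a^2 + b^2 + (a+b)^2)
        - (n₁*a + n₂*b + n₃*(a+b))^2 : ℤ) : ℝ)
      ≥ (a : ℝ)^2 + (b : ℝ)^2 + ((a : ℝ) + (b : ℝ))^2 := by
    exact_mod_cast (by exact_mod_cast hInt :
      ((3 * ((n₁^2 + n₂^2 + n₃^2) * (a^2 + b^2 + (a+b)^2)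
        - (n₁*a + n₂*b + n₃*(a+b))^2) : ℤ) : ℝ) ≥ ((a^2 + b^2 + (a+b)^2 : ℤ) : ℝ))
  linarith
end

section
/- For a = (a, a+b, a+2b, b) with a, b positive integers and any n ∈ ℤ⁴ with all coordinates odd, one has S_a(n) ≥ (2/3)‖a‖², where S_a(n) = ‖n‖²‖a‖² − (n·a)². -/
/-- For `a = (a, a+b, a+2b, b)` with `a, b` positive and `n` with all odd
coordinates, `S_a(n) ≥ (2/3)‖a‖²`. -/
theorem S_B2_ge (a b : ℤ) (ha : 0 < a) (hb : 0 < b)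
    (n₁ n₂ n₃ n₄ : ℤ) (h₁ : Odd n₁) (h₂ : Odd n₂) (h₃ : Odd n₃) (h₄ : Odd n₄) :
    (((n₁^2 + n₂^2 + n₃^2 + n₄^2) * (a^2 + (a+b)^2 + (a+2*b)^2 + b^2)
        - (n₁*a + n₂*(a+b) + n₃*(a+2*b) + n₄*b)^2 : ℤ) : ℝ)
      ≥ (2/3) * ((a : ℝ)^2 + ((a : ℝ)+(b : ℝ))^2 + ((a : ℝ)+2*(b : ℝ))^2 + (b : ℝ)^2) := by
  have hV : (0:ℤ) ≤ a^2 + (a+b)^2 + (a+2*b)^2 + b^2 := by positivity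
  have hp : Odd (n₂ - n₃ + n₄) := by
    obtain ⟨x, hx⟩ := h₂; obtain ⟨y, hy⟩ := h₃; obtain ⟨z, hz⟩ := h₄
    exact ⟨x - y + z, by omega⟩
  have hq : Odd (n₁ - n₂ + n₄) := by
    obtain ⟨x, hx⟩ := h₁; obtain ⟨y, hy⟩ := h₂; obtain ⟨z, hz⟩ := h₄
    exact ⟨x - y + z, by omega⟩
  have hp1 : (1:ℤ) ≤ (n₂ - n₃ + n₄)^2 := by
    obtain ⟨k, hk⟩ := hp; rw [hk]; have h0 : (2*k+1) ≠ 0 := by omega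
    have h1 := Int.one_le_abs h0
    nlinarith [sq_abs (2*k+1), h1]
  have hq1 : (1:ℤ) ≤ (n₁ - n₂ + n₄)^2 := by
    obtain ⟨k, hk⟩ := hq; rw [hk]; have h0 : (2*k+1) ≠ 0 := by omega
    have h1 := Int.one_le_abs h0
    nlinarith [sq_abs (2*k+1), h1]
  have key : (3:ℤ) * ((n₁^2 + n₂^2 + n₃^2 + n₄^2) * (a^2 + (a+b)^2 + (a+2*b)^2 + b^2)
        - (n₁*a + n₂*(a+b) + n₃*(a+2*b) + n₄*b)^2)
      = ((n₂ - n₃ + n₄)^2 + (n₁ - n₂ + n₄)^2) * (a^2 + (a+b)^2 + (a+2*b)^2 + b^2)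
        + 3 * (n₁*(a+2*b) + n₂*b - n₃*a - n₄*(a+b))^2 := by ring
  have hint : (2:ℤ) * (a^2 + (a+b)^2 + (a+2*b)^2 + b^2)
      ≤ 3 * ((n₁^2 + n₂^2 + n₃^2 + n₄^2) * (a^2 + (a+b)^2 + (a+2*b)^2 + b^2)
        - (n₁*a + n₂*(a+b) + n₃*(a+2*b) + n₄*b)^2) := by
    rw [key]
    nlinarith [sq_nonneg (n₁*(a+2*b) + n₂*b - n₃*a - n₄*(a+b))]
  have hR : (2:ℝ) * ((a : ℝ)^2 + ((a : ℝ)+(b : ℝ))^2 + ((a : ℝ)+2*(b : ℝ))^2 + (b : ℝ)^2)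
      ≤ 3 * (((n₁^2 + n₂^2 + n₃^2 + n₄^2) * (a^2 + (a+b)^2 + (a+2*b)^2 + b^2)
        - (n₁*a + n₂*(a+b) + n₃*(a+2*b) + n₄*b)^2 : ℤ) : ℝ) := by
    have := (@Int.cast_le ℝ _ _ _).mpr hint
    push_cast at this ⊢
    linarith
  rw [ge_iff_le, div_mul_eq_mul_div, div_le_iff₀ (by norm_num : (0:ℝ) < 3)]
  linarith
end

section
/- Let R be an irreducible root system with positive system R⁺, highest root α, Weyl vector w = (1/2)∑_{r∈R⁺} r, and h = (1/n)∑_{r∈R⁺}(r,r). Then h = (1/2)((α+w, α+w) − (w,w)), equivalently 2h = (α,α) + 2(w,α). -/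
open scoped BigOperators

section AuxRS

open scoped RealInnerProductSpace

variable {E : Type*} [NormedAddCommGroup E] [InnerProductSpace ℝ E]

lemma aux_inner_pos {x : E} (hx : x ≠ 0) : (0:ℝ) < inner ℝ x x :=
  lt_of_le_of_ne real_inner_self_nonneg fun h => hx (inner_self_eq_zero.mp h.symm)

lemma aux_sum_mem (R : Finset E) (h0 : (0:E) ∉ R)
    (hrefl : ∀ r ∈ R, ∀ s ∈ R, s - (2 * (inner ℝ s r : ℝ) / (inner ℝ r r : ℝ)) • r ∈ R)
    (hcrys : ∀ r ∈ R, ∀ s ∈ R, ∃ k : ℤ, 2 * (inner ℝ s r : ℝ) = (k : ℝ) * (inner ℝ r r : ℝ))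
    {a b : E} (ha : a ∈ R) (hb : b ∈ R) (hneg : (inner ℝ a b : ℝ) < 0) (hab : a + b ≠ 0) :
    a + b ∈ R := by
  have ha0 : a ≠ 0 := fun h => h0 (h ▸ ha)
  have hb0 : b ≠ 0 := fun h => h0 (h ▸ hb)
  have ha2 : (0:ℝ) < inner ℝ a a := aux_inner_pos ha0
  have hb2 : (0:ℝ) < inner ℝ b b := aux_inner_pos hb0
  obtain ⟨ka, hka⟩ := hcrys b hb a ha
  obtain ⟨kb, hkb⟩ := hcrys a ha b hb
  have hba : (inner ℝ b a : ℝ) = inner ℝ a b := real_inner_comm a b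
  have hkaneg : (ka : ℝ) < 0 := by
    by_contra hcon
    push_neg at hcon
    nlinarith
  have hkbneg : (kb : ℝ) < 0 := by
    by_contra hcon
    push_neg at hcon
    nlinarith
  by_cases hka1 : ka = -1
  · have hc : 2 * (inner ℝ a b : ℝ) / (inner ℝ b b : ℝ) = -1 := by
      rw [hka, hka1]; push_cast; field_simp
    have := hrefl b hb a ha
    rw [hc] at this
    simpa [sub_eq_add_neg] using this
  · by_cases hkb1 : kb = -1
    · have hc : 2 * (inner ℝ b a : ℝ) / (inner ℝ a a : ℝ) = -1 := by
        rw [hkb, hkb1]; push_cast; field_simp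
      have := hrefl a ha b hb
      rw [hc] at this
      rw [add_comm]
      simpa [sub_eq_add_neg] using this
    · -- ka ≤ -2 and kb ≤ -2
      have hka2 : (ka : ℝ) ≤ -2 := by
        have : ka ≤ -2 := by
          have : ka < 0 := by exact_mod_cast hkaneg
          omega
        exact_mod_cast this
      have hkb2 : (kb : ℝ) ≤ -2 := by
        have : kb ≤ -2 := by
          have : kb < 0 := by exact_mod_cast hkbneg
          omega
        exact_mod_cast this
      have h1 : (inner ℝ a b : ℝ) ≤ -(inner ℝ b b : ℝ) := by nlinarith
      have h2 : (inner ℝ a b : ℝ) ≤ -(inner ℝ a a : ℝ) := by nlinarith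
      have hcs := real_inner_mul_inner_self_le a b
      have hzero : (inner ℝ (a+b) (a+b) : ℝ) ≤ 0 := by
        rw [real_inner_add_add_self]
        nlinarith
      exact absurd (real_inner_self_nonpos.mp hzero) hab

lemma aux_schur [FiniteDimensional ℝ E] (n : ℕ) (hn : 0 < n)
    (hdim : Module.finrank ℝ E = n) (R : Finset E) (h0 : (0:E) ∉ R)
    (hrefl : ∀ r ∈ R, ∀ s ∈ R, s - (2 * (inner ℝ s r : ℝ) / (inner ℝ r r : ℝ)) • r ∈ R)
    (hirr : ∀ p : Submodule ℝ E,
      (∀ r ∈ R, ∀ x ∈ p, x - (2 * (inner ℝ x r : ℝ) / (inner ℝ r r : ℝ)) • r ∈ p) →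
      p = ⊥ ∨ p = ⊤)
    (x y : E) :
    ∑ r ∈ R, (inner ℝ x r : ℝ) * (inner ℝ y r : ℝ)
      = ((1 / (n:ℝ)) * ∑ r ∈ R, (inner ℝ r r : ℝ)) * (inner ℝ x y : ℝ) := by
  classical
  haveI : Nontrivial E := Module.nontrivial_of_finrank_pos (R := ℝ) (by rw [hdim]; exact hn)
  -- the operator T z = ∑ r ∈ R, ⟪r, z⟫ • r
  set T : E →ₗ[ℝ] E := ∑ r ∈ R, LinearMap.smulRight (innerSL ℝ r : E →ₗ[ℝ] ℝ) r with hTdef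
  have hT : ∀ z : E, T z = ∑ r ∈ R, (inner ℝ r z : ℝ) • r := by
    intro z
    simp [hTdef, LinearMap.sum_apply, LinearMap.smulRight_apply]
  have hTin : ∀ z u : E, (inner ℝ (T z) u : ℝ) = ∑ r ∈ R, (inner ℝ r z : ℝ) * (inner ℝ r u : ℝ) := by
    intro z u
    rw [hT, sum_inner]
    exact Finset.sum_congr rfl fun r _ => by rw [real_inner_smul_left]
  have hsymm : T.IsSymmetric := by
    intro u v
    rw [hTin u v, ← real_inner_comm u (T v), hTin v u]
    exact Finset.sum_congr rfl fun r _ => by ring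
  have hRne : ∀ r ∈ R, r ≠ 0 := fun r hr h => h0 (h ▸ hr)
  have hrr : ∀ r ∈ R, (inner ℝ r r : ℝ) ≠ 0 := fun r hr => ne_of_gt (aux_inner_pos (hRne r hr))
  set σ : E → E → E := fun r z => z - (2 * (inner ℝ z r : ℝ) / (inner ℝ r r : ℝ)) • r with hσ
  have hkey : ∀ r ∈ R, ∀ z : E, (inner ℝ (σ r z) r : ℝ) = -(inner ℝ z r : ℝ) := by
    intro r hr z
    simp only [hσ, inner_sub_left, real_inner_smul_left]
    rw [div_mul_cancel₀ _ (hrr r hr)]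
    ring
  have hinvol : ∀ r ∈ R, ∀ z : E, σ r (σ r z) = z := by
    intro r hr z
    show σ r z - (2 * (inner ℝ (σ r z) r : ℝ) / (inner ℝ r r : ℝ)) • r = z
    rw [hkey r hr z,
      show 2 * -(inner ℝ z r : ℝ) / (inner ℝ r r : ℝ)
        = -(2 * (inner ℝ z r : ℝ) / (inner ℝ r r : ℝ)) by ring]
    simp only [hσ]
    module
  have hselfadj : ∀ r ∈ R, ∀ a b : E, (inner ℝ (σ r a) b : ℝ) = (inner ℝ a (σ r b) : ℝ) := by
    intro r hr a b
    simp only [hσ, inner_sub_left, inner_sub_right, real_inner_smul_left, real_inner_smul_right]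
    rw [real_inner_comm r b]
    ring
  have hmemσ : ∀ r ∈ R, ∀ s ∈ R, σ r s ∈ R := fun r hr s hs => hrefl r hr s hs
  have hsum : ∀ r ∈ R, ∀ g : E → E, ∑ s ∈ R, g (σ r s) = ∑ s ∈ R, g s := by
    intro r hr g
    refine Finset.sum_nbij' (i := σ r) (j := σ r) (fun s hs => hmemσ r hr s hs)
      (fun s hs => hmemσ r hr s hs) (fun s hs => hinvol r hr s) (fun s hs => hinvol r hr s)
      (fun s hs => rfl)
  have hcomm : ∀ r ∈ R, ∀ z : E, T (σ r z) = σ r (T z) := by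
    intro r hr z
    have e1 : T (σ r z) = ∑ s ∈ R, (inner ℝ (σ r s) z : ℝ) • s := by
      rw [hT]
      exact Finset.sum_congr rfl fun s hs => by rw [hselfadj r hr s z]
    have e2 : ∑ s ∈ R, (inner ℝ (σ r s) z : ℝ) • s = ∑ s ∈ R, (inner ℝ s z : ℝ) • σ r s := by
      calc ∑ s ∈ R, (inner ℝ (σ r s) z : ℝ) • s
          = ∑ s ∈ R, (inner ℝ (σ r s) z : ℝ) • σ r (σ r s) := by
            exact Finset.sum_congr rfl fun s hs => by rw [hinvol r hr s]
        _ = ∑ s ∈ R, (inner ℝ s z : ℝ) • σ r s := hsum r hr (fun s => (inner ℝ s z : ℝ) • σ r s)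
    have e3 : ∑ s ∈ R, (inner ℝ s z : ℝ) • σ r s = σ r (T z) := by
      simp only [hσ, smul_sub, smul_smul]
      rw [Finset.sum_sub_distrib, ← Finset.sum_smul, ← hT]
      congr 2
      rw [hTin z r, Finset.mul_sum, Finset.sum_div]
      exact Finset.sum_congr rfl fun s _ => by ring
    rw [e1, e2, e3]
  obtain ⟨μ, hμ⟩ : ∃ μ : ℝ, Module.End.HasEigenvalue T μ :=
    ⟨_, hsymm.hasEigenvalue_iSup_of_finiteDimensional⟩
  set p := Module.End.eigenspace T μ with hp
  have hinv : ∀ r ∈ R, ∀ z ∈ p, z - (2 * (inner ℝ z r : ℝ) / (inner ℝ r r : ℝ)) • r ∈ p := by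
    intro r hr z hz
    rw [hp, Module.End.mem_eigenspace_iff] at hz ⊢
    have : T (σ r z) = σ r (T z) := hcomm r hr z
    rw [hσ] at this
    simp only at this
    rw [this, hz, real_inner_smul_left, smul_sub, smul_smul,
      show μ * (2 * (inner ℝ z r : ℝ) / (inner ℝ r r : ℝ))
        = 2 * (μ * (inner ℝ z r : ℝ)) / (inner ℝ r r : ℝ) by ring]
  have hptop : p = ⊤ := by
    rcases hirr p hinv with hbot | htop
    · exact absurd hbot hμ
    · exact htop
  have hTz : ∀ z : E, T z = μ • z := by
    intro z
    have hzp : z ∈ p := by rw [hptop]; trivial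
    exact Module.End.mem_eigenspace_iff.mp hzp
  -- trace computation
  set b := stdOrthonormalBasis ℝ E with hb
  have hb1 : ∀ i, (inner ℝ (b i) (b i) : ℝ) = 1 := by
    intro i
    rw [real_inner_self_eq_norm_mul_norm, b.orthonormal.1 i, mul_one]
  have tr1 : ∑ i, (inner ℝ (T (b i)) (b i) : ℝ) = (n : ℝ) * μ := by
    simp only [hTz, real_inner_smul_left, hb1, mul_one]
    rw [Finset.sum_const, Finset.card_univ, Fintype.card_fin, hdim, nsmul_eq_mul]
  have tr2 : ∑ i, (inner ℝ (T (b i)) (b i) : ℝ) = ∑ r ∈ R, (inner ℝ r r : ℝ) := by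
    rw [Finset.sum_congr rfl fun i _ => hTin (b i) (b i), Finset.sum_comm]
    refine Finset.sum_congr rfl fun r _ => ?_
    rw [← b.sum_inner_mul_inner r r]
    exact Finset.sum_congr rfl fun i _ => by rw [real_inner_comm r (b i)]
  have hμval : μ = (1 / (n : ℝ)) * ∑ r ∈ R, (inner ℝ r r : ℝ) := by
    have hn' : (n : ℝ) ≠ 0 := Nat.cast_ne_zero.mpr hn.ne'
    rw [← tr2, tr1]
    field_simp
  calc ∑ r ∈ R, (inner ℝ x r : ℝ) * (inner ℝ y r : ℝ)
      = ∑ r ∈ R, (inner ℝ r y : ℝ) * (inner ℝ r x : ℝ) := by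
        refine Finset.sum_congr rfl fun r _ => ?_
        rw [real_inner_comm x r, real_inner_comm y r]
        ring
    _ = (inner ℝ (T y) x : ℝ) := (hTin y x).symm
    _ = μ * (inner ℝ x y : ℝ) := by
        rw [hTz, real_inner_smul_left, real_inner_comm]
    _ = ((1 / (n : ℝ)) * ∑ r ∈ R, (inner ℝ r r : ℝ)) * (inner ℝ x y : ℝ) := by rw [hμval]

lemma aux_double (R Rplus : Finset E) (h0 : (0:E) ∉ R)
    (hneg : ∀ r ∈ R, -r ∈ R) (hsub : Rplus ⊆ R)
    (hpart : ∀ r ∈ R, (r ∈ Rplus ↔ -r ∉ Rplus))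
    (f : E → ℝ) (hf : ∀ x, f (-x) = f x) :
    ∑ r ∈ R, f r = 2 * ∑ r ∈ Rplus, f r := by
  classical
  have hdisj : Disjoint Rplus (Rplus.image (fun r => -r)) := by
    rw [Finset.disjoint_left]
    intro x hx hx'
    obtain ⟨y, hy, hyx⟩ := Finset.mem_image.mp hx'
    have := (hpart x (hsub hx)).mp hx
    apply this
    rw [← hyx, neg_neg]
    exact hy
  have hunion : Rplus ∪ Rplus.image (fun r => -r) = R := by
    ext x
    simp only [Finset.mem_union, Finset.mem_image]
    constructor
    · rintro (hx | ⟨y, hy, rfl⟩)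
      · exact hsub hx
      · exact hneg y (hsub hy)
    · intro hx
      by_cases hxp : x ∈ Rplus
      · exact Or.inl hxp
      · refine Or.inr ⟨-x, ?_, neg_neg x⟩
        by_contra hc
        exact hxp (((hpart x hx).mpr) hc)
  rw [← hunion, Finset.sum_union hdisj,
    Finset.sum_image (fun x _ y _ h => neg_injective h)]
  simp only [hf]
  ring

lemma aux_coeff (R Rplus : Finset E) (h0 : (0:E) ∉ R)
    (hrefl : ∀ r ∈ R, ∀ s ∈ R, s - (2 * (inner ℝ s r : ℝ) / (inner ℝ r r : ℝ)) • r ∈ R)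
    (hcrys : ∀ r ∈ R, ∀ s ∈ R, ∃ k : ℤ, 2 * (inner ℝ s r : ℝ) = (k : ℝ) * (inner ℝ r r : ℝ))
    (hsub : Rplus ⊆ R)
    (hpart : ∀ r ∈ R, (r ∈ Rplus ↔ -r ∉ Rplus))
    (α : E) (hα : α ∈ Rplus)
    (hhigh : ∀ r ∈ Rplus, α + r ∉ R)
    (hlong : ∀ r ∈ R, (inner ℝ r r : ℝ) ≤ (inner ℝ α α : ℝ))
    {r : E} (hr : r ∈ Rplus) (hne : r ≠ α) (hnz : (inner ℝ r α : ℝ) ≠ 0) :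
    2 * (inner ℝ r α : ℝ) = (inner ℝ α α : ℝ) := by
  have hαR : α ∈ R := hsub hα
  have hrR : r ∈ R := hsub hr
  have hA : (0:ℝ) < inner ℝ α α := aux_inner_pos (fun hc => h0 (hc ▸ hαR))
  have hr2 : (0:ℝ) < inner ℝ r r := aux_inner_pos (fun hc => h0 (hc ▸ hrR))
  obtain ⟨k, hk⟩ := hcrys α hαR r hrR
  have hpos : (0:ℝ) < inner ℝ r α := by
    rcases lt_trichotomy (inner ℝ r α : ℝ) 0 with hlt | heq | hgt
    · exfalso
      have hαr : (inner ℝ α r : ℝ) < 0 := by rwa [real_inner_comm α r] at hlt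
      have hne0 : α + r ≠ 0 := by
        intro hc
        have hrneg : r = -α := by linear_combination (norm := abel) hc
        have := (hpart α hαR).mp hα
        rw [hrneg] at hr
        exact this hr
      exact hhigh r hr (aux_sum_mem R h0 hrefl hcrys hαR hrR hαr hne0)
    · exact absurd heq hnz
    · exact hgt
  have hk1 : (1:ℝ) ≤ (k:ℝ) := by
    have : (0:ℝ) < (k:ℝ) := by nlinarith
    exact_mod_cast (by exact_mod_cast this : 0 < k)
  have hcs := real_inner_mul_inner_self_le r α
  have hlongr := hlong r hrR
  have hle : (inner ℝ r α : ℝ) ≤ inner ℝ α α := by nlinarith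
  have hk2 : (k:ℝ) ≤ 2 := by nlinarith
  have hkint : k = 1 ∨ k = 2 := by
    have h1 : 1 ≤ k := by exact_mod_cast hk1
    have h2 : k ≤ 2 := by exact_mod_cast hk2
    omega
  rcases hkint with hk1' | hk2'
  · rw [hk1'] at hk
    push_cast at hk
    linarith
  · exfalso
    rw [hk2'] at hk
    push_cast at hk
    have hra : (inner ℝ r α : ℝ) = inner ℝ α α := by linarith
    have hrr : (inner ℝ r r : ℝ) = inner ℝ α α := by nlinarith
    have : (inner ℝ (r - α) (r - α) : ℝ) = 0 := by
      rw [real_inner_sub_sub_self]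
      linarith
    exact hne (sub_eq_zero.mp (inner_self_eq_zero.mp this))

end AuxRS

/-- For an irreducible crystallographic root system `R` with positive system
`R⁺`, highest root `α`, Weyl vector `w = (1/2)∑_{r∈R⁺} r` and
`h = (1/n)∑_{r∈R⁺}(r,r)`, one has `h = (1/2)((α+w,α+w) − (w,w))`, equivalently
`2h = (α,α) + 2(w,α)`. -/
theorem h_eq_highest_root_formula
    {E : Type*} [NormedAddCommGroup E] [InnerProductSpace ℝ E]
    [FiniteDimensional ℝ E]
    (n : ℕ) (hn : 0 < n) (hdim : Module.finrank ℝ E = n)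
    (R Rplus : Finset E)
    (h0 : (0 : E) ∉ R)
    (hneg : ∀ r ∈ R, -r ∈ R)
    (hrefl : ∀ r ∈ R, ∀ s ∈ R,
      s - (2 * (inner ℝ s r : ℝ) / (inner ℝ r r : ℝ)) • r ∈ R)
    (hcrys : ∀ r ∈ R, ∀ s ∈ R, ∃ k : ℤ,
      2 * (inner ℝ s r : ℝ) = (k : ℝ) * (inner ℝ r r : ℝ))
    (hsub : Rplus ⊆ R)
    (hpart : ∀ r ∈ R, (r ∈ Rplus ↔ -r ∉ Rplus))
    (hirr : ∀ p : Submodule ℝ E,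
      (∀ r ∈ R, ∀ x ∈ p, x - (2 * (inner ℝ x r : ℝ) / (inner ℝ r r : ℝ)) • r ∈ p) →
      p = ⊥ ∨ p = ⊤)
    (α : E) (hα : α ∈ Rplus)
    (hhigh : ∀ r ∈ Rplus, α + r ∉ R)
    (hlong : ∀ r ∈ R, (inner ℝ r r : ℝ) ≤ (inner ℝ α α : ℝ))
    (h : ℝ) (hh : h = (1 / (n : ℝ)) * ∑ r ∈ Rplus, (inner ℝ r r : ℝ))
    (w : E) (hw : w = (1/2 : ℝ) • ∑ r ∈ Rplus, r) :
    h = (1/2) * ((inner ℝ (α + w) (α + w) : ℝ) - (inner ℝ w w : ℝ)) ∧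
    2 * h = (inner ℝ α α : ℝ) + 2 * (inner ℝ w α : ℝ) := by

  classical
  have hαR : α ∈ R := hsub hα
  have hA : (0:ℝ) < inner ℝ α α := aux_inner_pos (fun hc => h0 (hc ▸ hαR))
  set A : ℝ := (inner ℝ α α : ℝ) with hAdef
  set S : ℝ := ∑ r ∈ Rplus, (inner ℝ α r : ℝ) with hSdef
  have key : ∀ r ∈ Rplus, r ≠ α →
      (inner ℝ α r : ℝ) * (inner ℝ α r : ℝ) = (A/2) * (inner ℝ α r : ℝ) := by
    intro r hrp hrne
    by_cases hz : (inner ℝ α r : ℝ) = 0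
    · rw [hz]; ring
    · have hnz : (inner ℝ r α : ℝ) ≠ 0 := by
        rw [real_inner_comm α r]; exact hz
      have h2 := aux_coeff R Rplus h0 hrefl hcrys hsub hpart α hα hhigh hlong hrp hrne hnz
      rw [real_inner_comm α r] at h2
      rw [show (inner ℝ α r : ℝ) = A/2 by rw [hAdef]; linarith]
  have hQ : ∑ r ∈ Rplus, (inner ℝ α r : ℝ) * (inner ℝ α r : ℝ) = A*A + (A/2)*(S - A) := by
    rw [← Finset.add_sum_erase _ _ hα]
    have herase : ∑ r ∈ Rplus.erase α, (inner ℝ α r : ℝ) * (inner ℝ α r : ℝ)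
        = (A/2) * ∑ r ∈ Rplus.erase α, (inner ℝ α r : ℝ) := by
      rw [Finset.mul_sum]
      exact Finset.sum_congr rfl fun r hrE =>
        key r (Finset.mem_of_mem_erase hrE) (Finset.ne_of_mem_erase hrE)
    rw [herase, Finset.sum_erase_eq_sub hα]
  have hschur := aux_schur n hn hdim R h0 hrefl hirr α α
  have hd1 := aux_double R Rplus h0 hneg hsub hpart
    (fun r => (inner ℝ α r : ℝ) * (inner ℝ α r : ℝ))
    (by intro x; simp only [inner_neg_right]; ring)
  have hd2 := aux_double R Rplus h0 hneg hsub hpart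
    (fun r => (inner ℝ r r : ℝ)) (by intro x; simp [inner_neg_neg])
  have hstep : 2*h*A = (A + S)*A := by
    rw [hd1, hQ, hd2] at hschur
    rw [hh]
    linear_combination -hschur
  have h2A : 2*h = A + S := mul_right_cancel₀ (ne_of_gt hA) hstep
  have hwα : 2 * (inner ℝ w α : ℝ) = S := by
    rw [hw, real_inner_smul_left, sum_inner,
      show ∑ r ∈ Rplus, (inner ℝ r α : ℝ) = S from
        Finset.sum_congr rfl fun r _ => real_inner_comm α r]
    ring
  have hsecond : 2 * h = (inner ℝ α α : ℝ) + 2 * (inner ℝ w α : ℝ) := by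
    rw [hwα, ← hAdef, h2A]
  refine ⟨?_, hsecond⟩
  have hexp : (inner ℝ (α + w) (α + w) : ℝ)
      = (inner ℝ α α : ℝ) + 2 * (inner ℝ α w : ℝ) + (inner ℝ w w : ℝ) :=
    real_inner_add_add_self α w
  rw [hexp, show (inner ℝ α w : ℝ) = (inner ℝ w α : ℝ) from real_inner_comm w α]
  linarith [hsecond]
end
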